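/- Let C be an abelian category that is well-powered, and let X be an object of C. Then any two finite maximal chains of subobjects of X from ⊥ to ⊤ have equal length; precisely, if ⊥ = A₀ ⋖ A₁ ⋖ … ⋖ A_k = ⊤ and ⊥ = B₀ ⋖ B₁ ⋖ … ⋖ B_m = ⊤ are two chains in the subobject lattice Subobject X in which every step is a covering relation, then k = m (the Jordan–Hölder property for abelian categories with finite ascending chains). -/

import Mathlib

open CategoryTheory

namespace JordanHolderAbelianAux

open CategoryTheory.Limits CategoryTheory.Abelian
open scoped Pseudoelement

universe v u

variable {C : Type u} [Category.{v} C] [Abelian C]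

noncomputable section

open CategoryTheory.Abelian.Pseudoelement

/-- Exactness of `s.arrow` followed by its cokernel projection. -/
lemma exact_arrow_cokernel {X : C} (s : Subobject X) :
    (ShortComplex.mk s.arrow (cokernel.π s.arrow) (cokernel.condition _)).Exact :=
  ShortComplex.exact_of_f_is_kernel _
    (Abelian.monoIsKernelOfCokernel (CokernelCofork.ofπ _ (cokernel.condition s.arrow))
      (cokernelIsCokernel s.arrow))

lemma pseudo_id_apply {P : C} (x : Pseudoelement P) : pseudoApply (𝟙 P) x = x :=
  Quotient.inductionOn x fun a => by
    rw [pseudoApply_mk', Category.comp_id]; rfl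

/-- Pseudoelement membership in a subobject. -/
def Mem {X : C} (s : Subobject X) (x : Pseudoelement X) : Prop :=
  ∃ y : Pseudoelement (s : C), pseudoApply s.arrow y = x

lemma mem_iff {X : C} (s : Subobject X) (x : Pseudoelement X) :
    Mem s x ↔ pseudoApply (cokernel.π s.arrow) x = 0 := by
  constructor
  · rintro ⟨y, rfl⟩
    rw [← _root_.CategoryTheory.Abelian.Pseudoelement.comp_apply, cokernel.condition]
    exact _root_.CategoryTheory.Abelian.Pseudoelement.zero_apply _ _
  · intro h
    exact _root_.CategoryTheory.Abelian.Pseudoelement.pseudo_exact_of_exact (exact_arrow_cokernel s) x h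

lemma mem_of_le {X : C} {s t : Subobject X} (h : s ≤ t) {x : Pseudoelement X}
    (hx : Mem s x) : Mem t x := by
  obtain ⟨y, rfl⟩ := hx
  refine ⟨pseudoApply (Subobject.ofLE s t h) y, ?_⟩
  rw [← _root_.CategoryTheory.Abelian.Pseudoelement.comp_apply, Subobject.ofLE_arrow]

lemma arrow_comp_cokernel_π_of_le {X : C} {s t : Subobject X} (h : s ≤ t) :
    s.arrow ≫ cokernel.π t.arrow = 0 := by
  rw [← Subobject.ofLE_arrow h, Category.assoc, cokernel.condition, comp_zero]

lemma le_of_mem_le {X : C} {s t : Subobject X}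
    (h : ∀ x : Pseudoelement X, Mem s x → Mem t x) : s ≤ t := by
  have hz : s.arrow ≫ cokernel.π t.arrow = 0 := by
    apply _root_.CategoryTheory.Abelian.Pseudoelement.zero_morphism_ext
    intro a
    rw [_root_.CategoryTheory.Abelian.Pseudoelement.comp_apply]
    exact (mem_iff t _).1 (h _ ⟨a, rfl⟩)
  exact Subobject.le_of_comm (Abelian.monoLift t.arrow s.arrow hz)
    (Abelian.monoLift_comp _ _ _)

lemma mem_inf {X : C} {s t : Subobject X} {x : Pseudoelement X}
    (hs : Mem s x) (ht : Mem t x) : Mem (s ⊓ t) x := by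
  obtain ⟨ys, hys⟩ := hs
  obtain ⟨yt, hyt⟩ := ht
  have hpb : pseudoApply s.arrow ys = pseudoApply t.arrow yt := by rw [hys, hyt]
  obtain ⟨z, hz1, hz2⟩ := _root_.CategoryTheory.Abelian.Pseudoelement.pseudo_pullback hpb
  set h : pullback s.arrow t.arrow ⟶ X := pullback.fst s.arrow t.arrow ≫ s.arrow with hh
  haveI : Mono h := mono_comp _ _
  have h1 : Subobject.mk h ≤ s :=
    Subobject.mk_le_of_comm (pullback.fst s.arrow t.arrow) rfl
  have h2 : Subobject.mk h ≤ t :=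
    Subobject.mk_le_of_comm (pullback.snd s.arrow t.arrow) pullback.condition.symm
  have hmem : Mem (Subobject.mk h) x := by
    refine ⟨pseudoApply (Subobject.underlyingIso h).inv z, ?_⟩
    rw [← _root_.CategoryTheory.Abelian.Pseudoelement.comp_apply, Subobject.underlyingIso_arrow, hh,
      _root_.CategoryTheory.Abelian.Pseudoelement.comp_apply, hz1, hys]
  exact mem_of_le (le_inf h1 h2) hmem

/-- The subobject lattice of an object of an abelian category is modular. -/
instance subobject_isModularLattice {X : C} : IsModularLattice (Subobject X) := by
  constructor
  intro a b c hac
  apply le_of_mem_le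
  intro x hx
  -- x ∈ (a ⊔ b) ⊓ c
  have hxc : Mem c x := mem_of_le inf_le_right hx
  have hxab : Mem (a ⊔ b) x := mem_of_le inf_le_left hx
  -- sup is contained in the image of the coproduct map
  set u : ((Subobject.underlying.obj a) ⊞ (Subobject.underlying.obj b)) ⟶ X := biprod.desc a.arrow b.arrow with hu
  have hasup : a ≤ Subobject.mk (Limits.image.ι u) :=
    Subobject.le_mk_of_comm (biprod.inl ≫ factorThruImage u)
      (by simp [hu])
  have hbsup : b ≤ Subobject.mk (Limits.image.ι u) :=
    Subobject.le_mk_of_comm (biprod.inr ≫ factorThruImage u)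
      (by simp [hu])
  have hximg : Mem (Subobject.mk (Limits.image.ι u)) x :=
    mem_of_le (sup_le hasup hbsup) hxab
  obtain ⟨z0, hz0⟩ := hximg
  -- lift to a pseudoelement y of the biproduct with u y = x
  obtain ⟨y, hy⟩ :=
    _root_.CategoryTheory.Abelian.Pseudoelement.pseudo_surjective_of_epi (factorThruImage u)
      (pseudoApply (Subobject.underlyingIso (Limits.image.ι u)).hom z0)
  have huy : pseudoApply u y = x := by
    have : (factorThruImage u) ≫ (Limits.image.ι u) = u := image.fac u
    rw [← this, _root_.CategoryTheory.Abelian.Pseudoelement.comp_apply, hy, ← _root_.CategoryTheory.Abelian.Pseudoelement.comp_apply,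
      Subobject.underlyingIso_hom_comp_eq_mk, hz0]
  -- the "difference" trick
  set p := pseudoApply (biprod.fst : (Subobject.underlying.obj a) ⊞ (Subobject.underlying.obj b) ⟶ Subobject.underlying.obj a) y with hp
  have hfst : pseudoApply (biprod.fst : (Subobject.underlying.obj a) ⊞ (Subobject.underlying.obj b) ⟶ Subobject.underlying.obj a) y =
      pseudoApply biprod.fst (pseudoApply (biprod.inl : Subobject.underlying.obj a ⟶ (Subobject.underlying.obj a) ⊞ (Subobject.underlying.obj b)) p) := by
    rw [← _root_.CategoryTheory.Abelian.Pseudoelement.comp_apply, biprod.inl_fst, pseudo_id_apply]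
  obtain ⟨z, hz0', hzg⟩ := _root_.CategoryTheory.Abelian.Pseudoelement.sub_of_eq_image
    (biprod.fst : (Subobject.underlying.obj a) ⊞ (Subobject.underlying.obj b) ⟶ Subobject.underlying.obj a) y (pseudoApply (biprod.inl : Subobject.underlying.obj a ⟶ (Subobject.underlying.obj a) ⊞ (Subobject.underlying.obj b)) p) hfst
  -- z is in the image of inr
  have hexact : (ShortComplex.mk (biprod.inr : (Subobject.underlying.obj b) ⟶ (Subobject.underlying.obj a) ⊞ (Subobject.underlying.obj b))
      (biprod.fst : (Subobject.underlying.obj a) ⊞ (Subobject.underlying.obj b) ⟶ Subobject.underlying.obj a) biprod.inr_fst).Exact :=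
    ShortComplex.exact_of_f_is_kernel _ (biprod.isKernelFstKernelFork (Subobject.underlying.obj a) (Subobject.underlying.obj b))
  obtain ⟨w, hw⟩ := _root_.CategoryTheory.Abelian.Pseudoelement.pseudo_exact_of_exact hexact z hz0'
  -- key: b.arrow w lies in c
  have hbwc : Mem c (pseudoApply b.arrow w) := by
    rw [mem_iff]
    have hkill : pseudoApply (u ≫ cokernel.π c.arrow) (pseudoApply (biprod.inl : Subobject.underlying.obj a ⟶ (Subobject.underlying.obj a) ⊞ (Subobject.underlying.obj b)) p) = 0 := by
      rw [← _root_.CategoryTheory.Abelian.Pseudoelement.comp_apply, ← Category.assoc, biprod.inl_desc,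
        arrow_comp_cokernel_π_of_le hac]
      exact _root_.CategoryTheory.Abelian.Pseudoelement.zero_apply _ _
    have h1 := hzg _ (u ≫ cokernel.π c.arrow) hkill
    have h2 : pseudoApply (u ≫ cokernel.π c.arrow) y = 0 := by
      rw [_root_.CategoryTheory.Abelian.Pseudoelement.comp_apply, huy]
      exact (mem_iff c x).1 hxc
    calc pseudoApply (cokernel.π c.arrow) (pseudoApply b.arrow w)
        = pseudoApply (u ≫ cokernel.π c.arrow) z := by
          rw [← hw, _root_.CategoryTheory.Abelian.Pseudoelement.comp_apply, ← _root_.CategoryTheory.Abelian.Pseudoelement.comp_apply biprod.inr u,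
            biprod.inr_desc]
      _ = 0 := by rw [h1, h2]
  have hbw : Mem (b ⊓ c) (pseudoApply b.arrow w) := mem_inf ⟨w, rfl⟩ hbwc
  -- now show x ∈ a ⊔ (b ⊓ c)
  rw [mem_iff]
  set d := a ⊔ b ⊓ c with hd
  have hkill : pseudoApply (u ≫ cokernel.π d.arrow) (pseudoApply (biprod.inl : Subobject.underlying.obj a ⟶ (Subobject.underlying.obj a) ⊞ (Subobject.underlying.obj b)) p) = 0 := by
    rw [← _root_.CategoryTheory.Abelian.Pseudoelement.comp_apply, ← Category.assoc, biprod.inl_desc,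
      arrow_comp_cokernel_π_of_le (le_sup_left : a ≤ d)]
    exact _root_.CategoryTheory.Abelian.Pseudoelement.zero_apply _ _
  have h1 := hzg _ (u ≫ cokernel.π d.arrow) hkill
  have h2 : pseudoApply (u ≫ cokernel.π d.arrow) z = 0 := by
    rw [← hw, _root_.CategoryTheory.Abelian.Pseudoelement.comp_apply, ← _root_.CategoryTheory.Abelian.Pseudoelement.comp_apply biprod.inr u,
      biprod.inr_desc]
    exact (mem_iff d _).1 (mem_of_le (le_sup_right : b ⊓ c ≤ d) hbw)
  calc pseudoApply (cokernel.π d.arrow) x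
      = pseudoApply (u ≫ cokernel.π d.arrow) y := by rw [_root_.CategoryTheory.Abelian.Pseudoelement.comp_apply, huy]
    _ = pseudoApply (u ≫ cokernel.π d.arrow) z := h1.symm
    _ = 0 := h2

end

/-- Jordan–Hölder lattice structure on the subobject lattice, with trivial `Iso`. -/
instance jhl {X : C} : JordanHolderLattice (Subobject X) where
  IsMaximal x y := x ⋖ y
  lt_of_isMaximal h := h.lt
  sup_eq_of_isMaximal := by
    intro x y z hxz hyz hxy
    rcases hxz.eq_or_eq le_sup_left (sup_le hxz.le hyz.le) with h | h
    · exfalso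
      have hyx : y ≤ x := le_sup_right.trans h.le
      rcases hyz.eq_or_eq hyx hxz.lt.le with h' | h'
      · exact hxy h'
      · exact hxz.lt.ne h'
    · exact h
  isMaximal_inf_left_of_isMaximal_sup := by
    intro x y hxz hyz
    exact inf_covBy_of_covBy_sup_of_covBy_sup_left hxz hyz

end JordanHolderAbelianAux

universe u_1 u_2

/-- Jordan–Hölder property for abelian categories: in a well-powered abelian category,
any two finite maximal chains of subobjects of an object `X` from `⊥` to `⊤`
(every step being a covering relation) have equal length. -/
theorem jordan_holder_abelian_category {C : Type u_1} [Category.{u_2} C] [Abelian C]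
    [WellPowered.{u_2} C] (X : C) (k m : ℕ)
    (A : Fin (k + 1) → Subobject X) (B : Fin (m + 1) → Subobject X)
    (hA0 : A 0 = ⊥) (hAl : A (Fin.last k) = ⊤)
    (hB0 : B 0 = ⊥) (hBl : B (Fin.last m) = ⊤)
    (hA : ∀ i : Fin k, A i.castSucc ⋖ A i.succ)
    (hB : ∀ i : Fin m, B i.castSucc ⋖ B i.succ) :
    k = m := by
  let s₁ : CompositionSeries (Subobject X) := ⟨k, A, hA⟩
  let s₂ : CompositionSeries (Subobject X) := ⟨m, B, hB⟩
  have hhead : s₁.head = s₂.head := by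
    show A 0 = B 0
    rw [hA0, hB0]
  have hlast : s₁.last = s₂.last := by
    show A (Fin.last k) = B (Fin.last m)
    rw [hAl, hBl]
  exact (CompositionSeries.jordan_holder s₁ s₂ hhead hlast).length_eq
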